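/- The classical mean energy per oscillator $\bar{E}(T) = \frac{k_B T}{2} + \sqrt{\frac{k_B T}{2\pi\beta m}}\, \frac{e^{-1/(2\beta m k_B T)}}{\mathrm{erfc}(1/\sqrt{2\beta m k_B T})} - \frac{1}{2\beta m}$ satisfies $\bar{E}(T) < k_B T$ for all $T > 0$; i.e., the GUP classical mean energy is strictly less than the equipartition value $k_B T$ of the ordinary harmonic oscillator. -/

import Mathlib

open MeasureTheory Set Filter

lemma exp_neg_sq_integrableOn (x : ℝ) :
    IntegrableOn (fun t : ℝ => Real.exp (-t ^ 2)) (Set.Ioi x) := by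
  have h := integrable_exp_neg_mul_sq (b := 1) one_pos
  simpa using h.integrableOn

lemma g_hasDerivAt (t : ℝ) :
    HasDerivAt (fun u : ℝ => u * Real.exp (-u ^ 2) / (2 * u ^ 2 + 1))
      (Real.exp (-t ^ 2) * (1 - 4 * t ^ 2 - 4 * t ^ 4) / (2 * t ^ 2 + 1) ^ 2) t := by
  have h1 : HasDerivAt (fun u : ℝ => -u ^ 2) (-(2 * t)) t := by
    simpa using (hasDerivAt_pow 2 t).fun_neg
  have h2 : HasDerivAt (fun u : ℝ => Real.exp (-u ^ 2))
      (Real.exp (-t ^ 2) * -(2 * t)) t := h1.exp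
  have h3 : HasDerivAt (fun u : ℝ => u * Real.exp (-u ^ 2))
      (1 * Real.exp (-t ^ 2) + t * (Real.exp (-t ^ 2) * -(2 * t))) t :=
    (hasDerivAt_id t).mul h2
  have h4 : HasDerivAt (fun u : ℝ => 2 * u ^ 2 + 1) (2 * (2 * t)) t := by
    simpa using ((hasDerivAt_pow 2 t).const_mul 2).add_const 1
  have hden : (2 * t ^ 2 + 1 : ℝ) ≠ 0 := by positivity
  have h5 := h3.fun_div h4 hden
  refine h5.congr_deriv ?_
  ring

lemma gderiv_integrableOn (x : ℝ) :
    IntegrableOn (fun t : ℝ =>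
      Real.exp (-t ^ 2) * (1 - 4 * t ^ 2 - 4 * t ^ 4) / (2 * t ^ 2 + 1) ^ 2)
      (Set.Ioi x) := by
  apply Integrable.mono (exp_neg_sq_integrableOn x)
  · apply Continuous.aestronglyMeasurable
    apply Continuous.div (by continuity) (by continuity)
    intro t; positivity
  · filter_upwards with t
    have he : (0:ℝ) < Real.exp (-t ^ 2) := Real.exp_pos _
    rw [Real.norm_eq_abs, Real.norm_eq_abs, abs_div, abs_mul,
      abs_of_pos he, abs_of_pos (by positivity : (0:ℝ) < (2 * t ^ 2 + 1) ^ 2),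
      div_le_iff₀ (by positivity)]
    have : |1 - 4 * t ^ 2 - 4 * t ^ 4| ≤ (2 * t ^ 2 + 1) ^ 2 := by
      rw [abs_le]; constructor <;> nlinarith [sq_nonneg t, sq_nonneg (t^2)]
    nlinarith [he.le]

lemma gauss_tail_lb (x : ℝ) :
    x * Real.exp (-x ^ 2) / (2 * x ^ 2 + 1) < ∫ t in Set.Ioi x, Real.exp (-t ^ 2) := by
  set g' : ℝ → ℝ := fun t =>
    Real.exp (-t ^ 2) * (1 - 4 * t ^ 2 - 4 * t ^ 4) / (2 * t ^ 2 + 1) ^ 2 with hg'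
  have htend : Tendsto (fun t : ℝ => t * Real.exp (-t ^ 2) / (2 * t ^ 2 + 1))
      atTop (nhds 0) := by
    have hexp : Tendsto (fun t : ℝ => Real.exp (-t ^ 2)) atTop (nhds 0) := by
      apply Real.tendsto_exp_atBot.comp
      exact tendsto_neg_atBot_iff.mpr (tendsto_pow_atTop two_ne_zero)
    apply squeeze_zero' (g := fun t : ℝ => Real.exp (-t ^ 2))
    · filter_upwards [eventually_ge_atTop (0:ℝ)] with t ht
      positivity
    · filter_upwards [eventually_ge_atTop (0:ℝ)] with t ht
      rw [div_le_iff₀ (by positivity)]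
      nlinarith [Real.exp_pos (-t ^ 2), sq_nonneg (t - 1)]
    · exact hexp
  have hFTC := integral_Ioi_of_hasDerivAt_of_tendsto
      (f := fun u : ℝ => u * Real.exp (-u ^ 2) / (2 * u ^ 2 + 1)) (f' := g') (a := x)
      (g_hasDerivAt x).continuousAt.continuousWithinAt
      (fun t _ => g_hasDerivAt t) (gderiv_integrableOn x) htend
  have hadd : ∫ t in Set.Ioi x, (Real.exp (-t ^ 2) + g' t)
      = (∫ t in Set.Ioi x, Real.exp (-t ^ 2)) + ∫ t in Set.Ioi x, g' t :=
    integral_add (exp_neg_sq_integrableOn x) (gderiv_integrableOn x)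
  have hpos : ∀ t : ℝ, 0 < Real.exp (-t ^ 2) + g' t := by
    intro t
    have : Real.exp (-t ^ 2) + g' t = 2 * Real.exp (-t ^ 2) / (2 * t ^ 2 + 1) ^ 2 := by
      rw [hg']; field_simp; ring
    rw [this]; positivity
  have hipos : 0 < ∫ t in Set.Ioi x, (Real.exp (-t ^ 2) + g' t) := by
    rw [setIntegral_pos_iff_support_of_nonneg_ae]
    · have hsupp : Function.support (fun t : ℝ => Real.exp (-t ^ 2) + g' t) = Set.univ :=
        Set.eq_univ_of_forall fun t => (hpos t).ne'
      rw [hsupp, Set.univ_inter, Real.volume_Ioi]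
      simp
    · filter_upwards with t; exact (hpos t).le
    · exact (exp_neg_sq_integrableOn x).add (gderiv_integrableOn x)
  rw [hadd, hFTC] at hipos
  linarith

noncomputable def erfc'' (x : ℝ) : ℝ :=
  2 / Real.sqrt Real.pi * ∫ t in Set.Ioi x, Real.exp (-t ^ 2)

theorem gup_classical_mean_energy_below_equipartition (β m kB : ℝ)
    (hβ : 0 < β) (hm : 0 < m) (hkB : 0 < kB) :
    ∀ T : ℝ, 0 < T →
      kB * T / 2 + Real.sqrt (kB * T / (2 * Real.pi * β * m)) *
          (Real.exp (-(1 / (2 * β * m * kB * T))) /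
            erfc'' (1 / Real.sqrt (2 * β * m * kB * T))) -
        1 / (2 * β * m) < kB * T := by
  intro T hT
  have hπ : (0:ℝ) < Real.sqrt Real.pi := Real.sqrt_pos.mpr Real.pi_pos
  set y := Real.sqrt (2 * β * m * kB * T) with hydef
  have hy0 : 0 < y := Real.sqrt_pos.mpr (by positivity)
  have hy2 : y ^ 2 = 2 * β * m * kB * T := Real.sq_sqrt (by positivity)
  set x := 1 / y with hxdef
  have hx0 : 0 < x := by positivity
  unfold erfc''
  set I := ∫ t in Set.Ioi x, Real.exp (-t ^ 2) with hIdef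
  have hIlb : x * Real.exp (-x ^ 2) / (2 * x ^ 2 + 1) < I := gauss_tail_lb x
  have hI0 : 0 < I := lt_trans (by positivity) hIlb
  have harg : 1 / (2 * β * m * kB * T) = x ^ 2 := by
    rw [hxdef, ← hy2]; field_simp
  rw [harg]
  have hsqrt : Real.sqrt (kB * T / (2 * Real.pi * β * m))
      = y / (2 * β * m * Real.sqrt Real.pi) := by
    rw [show kB * T / (2 * Real.pi * β * m)
        = (y / (2 * β * m * Real.sqrt Real.pi)) ^ 2 by
      rw [div_pow, hy2, mul_pow, Real.sq_sqrt Real.pi_pos.le]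
      field_simp]
    exact Real.sqrt_sq (by positivity)
  rw [hsqrt]
  have hmid : y / (2 * β * m * Real.sqrt Real.pi) *
      (Real.exp (-x ^ 2) / (2 / Real.sqrt Real.pi * I))
      = y * Real.exp (-x ^ 2) / (4 * β * m * I) := by
    field_simp
    ring
  rw [hmid]
  set E := Real.exp (-x ^ 2) with hEdef
  have hE0 : 0 < E := Real.exp_pos _
  have h1 : x * E < I * (2 * x ^ 2 + 1) :=
    (div_lt_iff₀ (show (0:ℝ) < 2 * x ^ 2 + 1 by positivity)).mp hIlb
  have e1 : y ^ 2 * (x * E) = y * E := by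
    rw [hxdef]; field_simp
  have e2 : y ^ 2 * (I * (2 * x ^ 2 + 1)) = (y ^ 2 + 2) * I := by
    rw [hxdef]; field_simp; ring
  have h2 : y * E < (y ^ 2 + 2) * I := by
    have h3 := mul_lt_mul_of_pos_left h1 (show (0:ℝ) < y ^ 2 by positivity)
    rwa [e1, e2] at h3
  have hkT : kB * T = y ^ 2 / (2 * β * m) := by
    rw [hy2]; field_simp
  have hlt : y * E / (4 * β * m * I) < (y ^ 2 + 2) / (4 * β * m) := by
    rw [div_lt_div_iff₀ (by positivity) (by positivity)]
    nlinarith [mul_lt_mul_of_pos_right h2 (show (0:ℝ) < 4 * β * m by positivity)]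
  have hexpand : (y ^ 2 + 2) / (4 * β * m)
      = y ^ 2 / (2 * β * m) / 2 + 1 / (2 * β * m) := by
    field_simp; ring
  rw [hkT]
  linarith [hlt, hexpand.le, hexpand.ge]
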